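/- Let R > 0 and h ∈ (0, R]. For a ∈ ℝ³ let S(a) = {(v, c) ∈ S² × ℝ³ : ‖a − c‖ ≤ R and ⟨a − c, v⟩ ≥ R − h}, i.e., the set of parameter pairs (direction, center) whose spherical cap contains a. Then μ(S(a)) = 4π · (π/3)·h²·(3R − h); moreover, if ‖a‖ ≤ R then S(a) ⊆ S² × {c ∈ ℝ³ : ‖c‖ ≤ 2R}. -/

import Mathlib

open scoped RealInnerProductSpace
open Real MeasureTheory Metric

noncomputable def capParamMeasure :
    Measure (sphere (0 : EuclideanSpace ℝ (Fin 3)) 1 × EuclideanSpace ℝ (Fin 3)) :=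
  ((volume : Measure (EuclideanSpace ℝ (Fin 3))).toSphere).prod volume

def capParams (R h : ℝ) (a : EuclideanSpace ℝ (Fin 3)) :
    Set (sphere (0 : EuclideanSpace ℝ (Fin 3)) 1 × EuclideanSpace ℝ (Fin 3)) :=
  {p | ‖a - p.2‖ ≤ R ∧ R - h ≤ ⟪a - p.2, (p.1 : EuclideanSpace ℝ (Fin 3))⟫}

lemma disk_vol (r : ℝ) :
    volume {w : Fin 2 → ℝ | (w 0)^2 + (w 1)^2 ≤ r} = ENNReal.ofReal (π * r) := by
  rcases lt_or_ge r 0 with hr | hr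
  · have : {w : Fin 2 → ℝ | (w 0)^2 + (w 1)^2 ≤ r} = ∅ := by
      ext w; simp only [Set.mem_setOf_eq, Set.mem_empty_iff_false, iff_false]
      nlinarith [sq_nonneg (w 0), sq_nonneg (w 1)]
    rw [this, measure_empty]
    symm; simpa using mul_nonpos_of_nonneg_of_nonpos pi_nonneg hr.le
  · have key : {w : Fin 2 → ℝ | (w 0)^2 + (w 1)^2 ≤ r} =
        (MeasurableEquiv.toLp 2 (Fin 2 → ℝ)) ⁻¹' (closedBall 0 (Real.sqrt r)) := by
      ext w
      simp only [Set.mem_setOf_eq, Set.mem_preimage, mem_closedBall, dist_zero_right]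
      have : ‖((MeasurableEquiv.toLp 2 (Fin 2 → ℝ)) w : EuclideanSpace ℝ (Fin 2))‖
          = Real.sqrt ((w 0)^2 + (w 1)^2) := by
        rw [EuclideanSpace.norm_eq]
        norm_num [Fin.sum_univ_two, sq_abs]
      rw [this, Real.sqrt_le_sqrt_iff hr]
    rw [key, (show MeasurePreserving (MeasurableEquiv.toLp 2 (Fin 2 → ℝ)) volume volume from (by simpa using (EuclideanSpace.volume_preserving_symm_measurableEquiv_toLp (Fin 2)).symm _)).measure_preimage
        measurableSet_closedBall.nullMeasurableSet,
      EuclideanSpace.volume_closedBall]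
    have h2 : Real.Gamma ((Fintype.card (Fin 2)) / 2 + 1) = 1 := by
      norm_num [Real.Gamma_two]
    rw [h2]
    simp only [Fintype.card_fin]
    rw [← ENNReal.ofReal_pow (Real.sqrt_nonneg r), Real.sq_sqrt hr,
      Real.sq_sqrt pi_nonneg, ← ENNReal.ofReal_mul hr]
    rw [mul_comm r, div_one]

lemma euc3_vol (R h : ℝ) (hR : 0 < R) (hh : 0 < h) (hhR : h ≤ R) :
    volume {y : EuclideanSpace ℝ (Fin 3) | ‖y‖ ≤ R ∧ R - h ≤ y 0} =
      ENNReal.ofReal (π / 3 * h ^ 2 * (3 * R - h)) := by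
  set S : Set (EuclideanSpace ℝ (Fin 3)) := {y | ‖y‖ ≤ R ∧ R - h ≤ y 0} with hSdef
  have hSclosed : IsClosed S :=
    (isClosed_le continuous_norm continuous_const).inter
      (isClosed_le continuous_const (EuclideanSpace.proj (0 : Fin 3)).continuous)
  set T : Set (ℝ × (Fin 2 → ℝ)) :=
    {p | p.1 ^ 2 + ((p.2 0) ^ 2 + (p.2 1) ^ 2) ≤ R ^ 2 ∧ R - h ≤ p.1} with hTdef
  have hTclosed : IsClosed T := by
    rw [hTdef, Set.setOf_and]
    exact (isClosed_le (by fun_prop) continuous_const).inter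
      (isClosed_le continuous_const continuous_fst)
  have step1 : volume S = volume ((MeasurableEquiv.toLp 2 (Fin 3 → ℝ)) ⁻¹' S) :=
    ((show MeasurePreserving (MeasurableEquiv.toLp 2 (Fin 3 → ℝ)) volume volume from (by simpa using (EuclideanSpace.volume_preserving_symm_measurableEquiv_toLp (Fin 3)).symm _)).measure_preimage
        hSclosed.measurableSet.nullMeasurableSet).symm
  have step2 : (MeasurableEquiv.toLp 2 (Fin 3 → ℝ)) ⁻¹' S =
      (MeasurableEquiv.piFinSuccAbove (fun _ : Fin 3 => ℝ) 0) ⁻¹' T := by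
    ext x
    have hnorm : ‖((MeasurableEquiv.toLp 2 (Fin 3 → ℝ)) x : EuclideanSpace ℝ (Fin 3))‖
        = Real.sqrt ((x 0)^2 + ((x 1)^2 + (x 2)^2)) := by
      rw [EuclideanSpace.norm_eq]
      norm_num [Fin.sum_univ_three, sq_abs, add_assoc]
    have h0 : ((MeasurableEquiv.toLp 2 (Fin 3 → ℝ)) x : EuclideanSpace ℝ (Fin 3)) 0 = x 0 := rfl
    have hmk : (MeasurableEquiv.piFinSuccAbove (fun _ : Fin 3 => ℝ) 0) x
        = (x 0, fun j : Fin 2 => x j.succ) := rfl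
    simp only [Set.mem_preimage, hSdef, hTdef, Set.mem_setOf_eq, hnorm, hmk, h0]
    have hRs : R = Real.sqrt (R ^ 2) := (Real.sqrt_sq hR.le).symm
    have e1 : Fin.succ (0 : Fin 2) = (1 : Fin 3) := rfl
    have e2 : Fin.succ (1 : Fin 2) = (2 : Fin 3) := rfl
    rw [e1, e2]
    constructor
    · rintro ⟨h1, h2⟩
      refine ⟨?_, h2⟩
      rw [hRs] at h1
      exact (Real.sqrt_le_sqrt_iff (by positivity)).mp h1
    · rintro ⟨h1, h2⟩
      refine ⟨?_, h2⟩
      rw [hRs]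
      exact Real.sqrt_le_sqrt h1
  have step3 : volume ((MeasurableEquiv.piFinSuccAbove (fun _ : Fin 3 => ℝ) 0) ⁻¹' T)
      = ((volume : Measure ℝ).prod (volume : Measure (Fin 2 → ℝ))) T :=
    (MeasureTheory.volume_preserving_piFinSuccAbove (fun _ : Fin 3 => ℝ) 0).measure_preimage
      hTclosed.measurableSet.nullMeasurableSet
  rw [step1, step2, step3]
  rw [Measure.prod_apply hTclosed.measurableSet]
  have hslice : ∀ t : ℝ, volume (Prod.mk t ⁻¹' T) =
      Set.indicator (Set.Ici (R - h)) (fun t => ENNReal.ofReal (π * (R ^ 2 - t ^ 2))) t := by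
    intro t
    rcases le_or_gt (R - h) t with ht | ht
    · rw [Set.indicator_of_mem (Set.mem_Ici.mpr ht)]
      have : Prod.mk t ⁻¹' T = {w : Fin 2 → ℝ | (w 0)^2 + (w 1)^2 ≤ R^2 - t^2} := by
        ext w
        simp only [Set.mem_preimage, hTdef, Set.mem_setOf_eq, ht, and_true]
        constructor <;> intro <;> linarith
      rw [this, disk_vol]
    · rw [Set.indicator_of_notMem (fun hm => (not_le.mpr ht) (Set.mem_Ici.mp hm))]
      have : Prod.mk t ⁻¹' T = ∅ := by
        ext w
        simp only [Set.mem_preimage, hTdef, Set.mem_setOf_eq, Set.mem_empty_iff_false, iff_false]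
        rintro ⟨-, h2⟩; linarith
      rw [this, measure_empty]
  simp only [hslice]
  rw [lintegral_indicator measurableSet_Ici]
  have hsplit : Set.Ici (R - h) = Set.Icc (R - h) R ∪ Set.Ioi R :=
    (Set.Icc_union_Ioi_eq_Ici (by linarith)).symm
  rw [hsplit, lintegral_union measurableSet_Ioi
    (Set.disjoint_left.mpr fun t ht1 ht2 => absurd ht1.2 (not_le.mpr (Set.mem_Ioi.mp ht2)))]
  have hend : ∫⁻ t in Set.Ioi R, ENNReal.ofReal (π * (R ^ 2 - t ^ 2)) = 0 := by
    have hz : ∀ t : ℝ, t ∈ Set.Ioi R →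
        ENNReal.ofReal (π * (R ^ 2 - t ^ 2)) = (fun _ : ℝ => (0 : ENNReal)) t := by
      intro t ht
      have ht' : R < t := Set.mem_Ioi.mp ht
      have h2 : R ^ 2 < t ^ 2 := by nlinarith
      simp only [ENNReal.ofReal_eq_zero]
      nlinarith [pi_pos]
    rw [setLIntegral_congr_fun measurableSet_Ioi hz, lintegral_zero]
  rw [hend, add_zero]
  have hint : ∫⁻ t in Set.Icc (R - h) R, ENNReal.ofReal (π * (R ^ 2 - t ^ 2)) =
      ENNReal.ofReal (∫ t in Set.Icc (R - h) R, π * (R ^ 2 - t ^ 2)) := by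
    rw [← MeasureTheory.ofReal_integral_eq_lintegral_ofReal]
    · exact (Continuous.integrableOn_Icc (by fun_prop))
    · refine ae_restrict_of_forall_mem measurableSet_Icc (fun t ht => ?_)
      simp only [Set.mem_Icc] at ht
      have ht0 : 0 ≤ t := le_trans (by linarith) ht.1
      have h2 : t ^ 2 ≤ R ^ 2 := by nlinarith
      simp only [Pi.zero_apply]
      exact mul_nonneg pi_pos.le (by linarith)
  rw [hint]
  congr 1
  rw [MeasureTheory.integral_Icc_eq_integral_Ioc, ← intervalIntegral.integral_of_le (by linarith)]
  rw [intervalIntegral.integral_const_mul]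
  rw [intervalIntegral.integral_sub intervalIntegrable_const
    (intervalIntegral.intervalIntegrable_pow 2)]
  rw [intervalIntegral.integral_const, integral_pow]
  simp only [smul_eq_mul]
  push_cast
  ring

lemma cap_vol (R h : ℝ) (hR : 0 < R) (hh : 0 < h) (hhR : h ≤ R)
    (v : EuclideanSpace ℝ (Fin 3)) (hv : ‖v‖ = 1) :
    volume {x : EuclideanSpace ℝ (Fin 3) | ‖x‖ ≤ R ∧ R - h ≤ ⟪x, v⟫} =
      ENNReal.ofReal (π / 3 * h ^ 2 * (3 * R - h)) := by
  have horth : Orthonormal ℝ (Set.restrict {(0 : Fin 3)} (fun _ : Fin 3 => v)) := by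
    refine ⟨fun i => hv, fun i j hij => absurd (Subtype.ext ?_) hij⟩
    exact (Set.mem_singleton_iff.mp i.2).trans (Set.mem_singleton_iff.mp j.2).symm
  obtain ⟨b, hb⟩ := horth.exists_orthonormalBasis_extension_of_card_eq
    (by simp [finrank_euclideanSpace]) 
  have hb0 : b 0 = v := hb 0 rfl
  have hkey : {x : EuclideanSpace ℝ (Fin 3) | ‖x‖ ≤ R ∧ R - h ≤ ⟪x, v⟫} =
      b.repr ⁻¹' {y : EuclideanSpace ℝ (Fin 3) | ‖y‖ ≤ R ∧ R - h ≤ y 0} := by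
    ext x
    simp only [Set.mem_setOf_eq, Set.mem_preimage]
    rw [b.repr.norm_map]
    have : ⟪x, v⟫ = b.repr x 0 := by
      rw [← hb0, ← b.repr.inner_map_map, b.repr_self]
      rw [EuclideanSpace.inner_single_right]
      simp
    rw [this]
  rw [hkey, b.measurePreserving_repr.measure_preimage]
  · exact euc3_vol R h hR hh hhR
  · refine (IsClosed.measurableSet ?_).nullMeasurableSet
    rw [Set.setOf_and]
    exact (isClosed_le continuous_norm continuous_const).inter
      (isClosed_le continuous_const (EuclideanSpace.proj (0 : Fin 3)).continuous)

theorem measure_capParams :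
    ∀ R : ℝ, 0 < R → ∀ h : ℝ, 0 < h → h ≤ R →
      ∀ a : EuclideanSpace ℝ (Fin 3),
        capParamMeasure (capParams R h a) =
          ENNReal.ofReal (4 * π * (π / 3 * h ^ 2 * (3 * R - h))) ∧
        (‖a‖ ≤ R → ∀ p ∈ capParams R h a, ‖p.2‖ ≤ 2 * R) := by
  intro R hR h hh hhR a
  constructor
  · have hmeas : MeasurableSet (capParams R h a) := by
      refine IsClosed.measurableSet ?_
      rw [capParams, Set.setOf_and]
      exact (isClosed_le ((continuous_const.sub continuous_snd).norm) continuous_const).inter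
        (isClosed_le continuous_const
          ((continuous_const.sub continuous_snd).inner
            (continuous_subtype_val.comp continuous_fst)))
    rw [capParamMeasure, Measure.prod_apply hmeas]
    have hslice : ∀ v : sphere (0 : EuclideanSpace ℝ (Fin 3)) 1,
        volume (Prod.mk v ⁻¹' capParams R h a) =
          ENNReal.ofReal (π / 3 * h ^ 2 * (3 * R - h)) := by
      intro v
      have hpre : Prod.mk v ⁻¹' capParams R h a =
          (fun c => a - c) ⁻¹'
            {x : EuclideanSpace ℝ (Fin 3) | ‖x‖ ≤ R ∧ R - h ≤ ⟪x, (v : EuclideanSpace ℝ (Fin 3))⟫} := by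
        rfl
      rw [hpre, (Measure.measurePreserving_sub_left volume a).measure_preimage]
      · exact cap_vol R h hR hh hhR _ (by simpa using mem_sphere_zero_iff_norm.mp v.2)
      · refine (IsClosed.measurableSet ?_).nullMeasurableSet
        rw [Set.setOf_and]
        exact (isClosed_le continuous_norm continuous_const).inter
          (isClosed_le continuous_const (continuous_id.inner continuous_const))
    simp only [hslice]
    rw [lintegral_const]
    rw [Measure.toSphere_apply_univ]
    have hball := EuclideanSpace.volume_ball (Fin 3) (0 : EuclideanSpace ℝ (Fin 3)) 1
    rw [hball]
    have hdim : Module.finrank ℝ (EuclideanSpace ℝ (Fin 3)) = 3 := by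
      simp [finrank_euclideanSpace]
    rw [hdim]
    have hcard : (Fintype.card (Fin 3) : ℝ) = 3 := by simp
    have hG : Real.Gamma ((Fintype.card (Fin 3) : ℝ) / 2 + 1) = 3 / 4 * Real.sqrt π := by
      rw [hcard, show (3:ℝ)/2 + 1 = (3/2 + 1 : ℝ) from rfl,
        Real.Gamma_add_one (by norm_num), show (3:ℝ)/2 = 1/2 + 1 by norm_num,
        Real.Gamma_add_one (by norm_num), Real.Gamma_one_half_eq]
      ring
    rw [hG]
    have hsq : Real.sqrt π ^ Fintype.card (Fin 3) = π * Real.sqrt π := by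
      simp only [Fintype.card_fin]
      rw [pow_succ, Real.sq_sqrt pi_nonneg]
    rw [hsq]
    have hval : π * Real.sqrt π / (3 / 4 * Real.sqrt π) = 4 / 3 * π := by
      rw [div_eq_iff (mul_pos (by norm_num) (Real.sqrt_pos.mpr pi_pos) : (0:ℝ) < 3 / 4 * Real.sqrt π).ne']
      ring
    rw [hval]
    simp only [Fintype.card_fin, ENNReal.ofReal_one, one_pow, one_mul]
    rw [← ENNReal.ofReal_natCast 3, ← ENNReal.ofReal_mul (by norm_num),
      ← ENNReal.ofReal_mul (mul_nonneg (mul_nonneg (by positivity) (sq_nonneg h)) (by linarith))]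
    congr 1
    push_cast
    ring
  · intro _ p hp
    have h1 : ‖a - p.2‖ ≤ R := hp.1
    have h2 : ‖p.2‖ = ‖a - (a - p.2)‖ := by rw [sub_sub_cancel]
    calc ‖p.2‖ = ‖a - (a - p.2)‖ := h2
      _ ≤ ‖a‖ + ‖a - p.2‖ := norm_sub_le _ _
      _ ≤ 2 * R := by linarith [‹‖a‖ ≤ R›]
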